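/- Let Q = (0,1)², let (T_j) be flat triangulated surfaces covering Q with size(T_j) → 0 and minimum triangle diameter ≥ ζ·size(T_j), and let B_j ⊂ T_j be subsets of 'bad' triangles. Fix v ∈ ℝ², δ > 0, and define A_j = {x ∈ Q : [x,x+v] ⊂ Q and #{K ∈ B_j : K ∩ [x,x+v] ≠ ∅} ≤ δ|v|/size(T_j)}. If #B_j · (size T_j)² → 0 as j → ∞, then the Lebesgue measure of {x ∈ Q : [x,x+v] ⊂ Q} \ A_j tends to 0. -/

import Mathlib

open MeasureTheory Filter
open scoped Classical

/-- The vertex set of a triangle given by its three vertices. -/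
def triVerts (t : EuclideanSpace ℝ (Fin 2) × EuclideanSpace ℝ (Fin 2) × EuclideanSpace ℝ (Fin 2)) :
    Set (EuclideanSpace ℝ (Fin 2)) := {t.1, t.2.1, t.2.2}

/-- The closed triangle (convex hull of the three vertices). -/
def triHull (t : EuclideanSpace ℝ (Fin 2) × EuclideanSpace ℝ (Fin 2) × EuclideanSpace ℝ (Fin 2)) :
    Set (EuclideanSpace ℝ (Fin 2)) := convexHull ℝ (triVerts t)

/-- The diameter of a triangle. -/
noncomputable def triDiam
    (t : EuclideanSpace ℝ (Fin 2) × EuclideanSpace ℝ (Fin 2) × EuclideanSpace ℝ (Fin 2)) : ℝ :=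
  Metric.diam (triHull t)

/-- The size of a flat triangulated surface: the maximal diameter of its triangles. -/
noncomputable def surfSize
    (T : Finset (EuclideanSpace ℝ (Fin 2) × EuclideanSpace ℝ (Fin 2) × EuclideanSpace ℝ (Fin 2))) :
    ℝ := sSup (triDiam '' (T : Set _))

/-- A flat triangulated surface: a finite collection of nondegenerate closed triangles
such that two distinct triangles intersect in the empty set, a common vertex, or a
common edge. -/
def IsFlatTriSurface
    (T : Finset (EuclideanSpace ℝ (Fin 2) × EuclideanSpace ℝ (Fin 2) × EuclideanSpace ℝ (Fin 2))) :
    Prop :=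
  (∀ t ∈ T, ¬ Collinear ℝ (triVerts t)) ∧
  ∀ s ∈ T, ∀ t ∈ T, s ≠ t →
    triHull s ∩ triHull t = ∅ ∨
    (∃ p, p ∈ triVerts s ∧ p ∈ triVerts t ∧ triHull s ∩ triHull t = {p}) ∨
    (∃ p q, p ≠ q ∧ p ∈ triVerts s ∧ p ∈ triVerts t ∧ q ∈ triVerts s ∧ q ∈ triVerts t ∧
      triHull s ∩ triHull t = segment ℝ p q)

/-- The unit square `Q = (0,1)²`. -/
def unitSq : Set (EuclideanSpace ℝ (Fin 2)) :=
  {x | x 0 ∈ Set.Ioo (0 : ℝ) 1 ∧ x 1 ∈ Set.Ioo (0 : ℝ) 1}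

/-- The segment `[x, x + v]` as a subset of the plane. -/
def segSet (x v : EuclideanSpace ℝ (Fin 2)) : Set (EuclideanSpace ℝ (Fin 2)) :=
  {y | ∃ t ∈ Set.Icc (0 : ℝ) 1, y = x + t • v}

section Aux

open Metric Set MeasureTheory

private lemma triVerts_finite
    (t : EuclideanSpace ℝ (Fin 2) × EuclideanSpace ℝ (Fin 2) × EuclideanSpace ℝ (Fin 2)) :
    (triVerts t).Finite := by
  unfold triVerts
  exact ((Set.finite_singleton _).insert _).insert _

private lemma triHull_compact
    (t : EuclideanSpace ℝ (Fin 2) × EuclideanSpace ℝ (Fin 2) × EuclideanSpace ℝ (Fin 2)) :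
    IsCompact (triHull t) := (triVerts_finite t).isCompact_convexHull ℝ

/-- The set of points `x` whose segment `[x,x+v]` meets the triangle `K`. -/
private def hitSet (v : EuclideanSpace ℝ (Fin 2))
    (K : EuclideanSpace ℝ (Fin 2) × EuclideanSpace ℝ (Fin 2) × EuclideanSpace ℝ (Fin 2)) :
    Set (EuclideanSpace ℝ (Fin 2)) :=
  {x | (triHull K ∩ segSet x v).Nonempty}

private lemma hitSet_eq (v : EuclideanSpace ℝ (Fin 2)) (K) :
    hitSet v K = (fun yt : EuclideanSpace ℝ (Fin 2) × ℝ => yt.1 - yt.2 • v) ''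
      (triHull K ×ˢ Set.Icc 0 1) := by
  ext x
  constructor
  · rintro ⟨y, hy, t, ht, hxy⟩
    exact ⟨(y, t), ⟨hy, ht⟩, by rw [hxy]; module⟩
  · rintro ⟨⟨y, t⟩, ⟨hy, ht⟩, rfl⟩
    exact ⟨y, hy, t, ht, by module⟩

private lemma hitSet_compact (v : EuclideanSpace ℝ (Fin 2)) (K) : IsCompact (hitSet v K) := by
  rw [hitSet_eq]
  exact ((triHull_compact K).prod isCompact_Icc).image
    (continuous_fst.sub (continuous_snd.smul continuous_const))

private lemma hitSet_measurable (v : EuclideanSpace ℝ (Fin 2)) (K) :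
    MeasurableSet (hitSet v K) := (hitSet_compact v K).isClosed.measurableSet

private lemma surfSize_pos
    {Tj : Finset (EuclideanSpace ℝ (Fin 2) × EuclideanSpace ℝ (Fin 2) × EuclideanSpace ℝ (Fin 2))}
    (hsurf : IsFlatTriSurface Tj) (hne : Tj.Nonempty) : 0 < surfSize Tj := by
  obtain ⟨K, hK⟩ := hne
  have hcol := hsurf.1 K hK
  obtain ⟨p, hp, q, hq, hpq⟩ : ∃ p ∈ triVerts K, ∃ q ∈ triVerts K, p ≠ q := by
    by_contra h
    push_neg at h
    have hsub : triVerts K = {K.1} := by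
      apply Set.Subset.antisymm
      · intro z hz
        simp only [Set.mem_singleton_iff]
        exact h z hz K.1 (Set.mem_insert _ _)
      · intro z hz
        simp only [Set.mem_singleton_iff] at hz
        subst hz; exact Set.mem_insert _ _
    rw [hsub] at hcol
    exact hcol (collinear_singleton ℝ _)
  have h1 : 0 < dist p q := dist_pos.2 hpq
  have h2 : dist p q ≤ triDiam K :=
    Metric.dist_le_diam_of_mem (triHull_compact K).isBounded
      (subset_convexHull ℝ _ hp) (subset_convexHull ℝ _ hq)
  have h3 : triDiam K ≤ surfSize Tj :=
    le_csSup ((Tj.finite_toSet.image triDiam).bddAbove) ⟨K, hK, rfl⟩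
  linarith

private lemma key_bound (δ : ℝ) (hδ : 0 < δ) (v : EuclideanSpace ℝ (Fin 2))
    (Tj Bj : Finset (EuclideanSpace ℝ (Fin 2) × EuclideanSpace ℝ (Fin 2) × EuclideanSpace ℝ (Fin 2)))
    (hBT : Bj ⊆ Tj) (hs : 0 < surfSize Tj) :
    volume ({x | segSet x v ⊆ unitSq} \
      {x | segSet x v ⊆ unitSq ∧
        ((Bj.filter (fun K => (triHull K ∩ segSet x v).Nonempty)).card : ℝ) ≤
          δ * ‖v‖ / surfSize Tj})
    ≤ ENNReal.ofReal
        ((8 * (volume (Metric.ball (0 : EuclideanSpace ℝ (Fin 2)) 1)).toReal * max 1 δ⁻¹) *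
          ((Bj.card : ℝ) * surfSize Tj ^ 2)) := by
  classical
  set s : ℝ := surfSize Tj with hsdef
  set κ : ENNReal := volume (Metric.ball (0 : EuclideanSpace ℝ (Fin 2)) 1) with hκdef
  have hκfin : κ ≠ ⊤ := measure_ball_lt_top.ne
  have hκ0 : 0 ≤ κ.toReal := ENNReal.toReal_nonneg
  set r : ℝ := ‖v‖ / s with hrdef
  have hr0 : 0 ≤ r := div_nonneg (norm_nonneg v) hs.le
  set N : ℕ := ⌊r⌋₊ + 1 with hNdef
  set m : ℕ := ⌊δ * ‖v‖ / s⌋₊ + 1 with hmdef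
  have hNpos : 0 < (N : ℝ) := by positivity
  -- every point of a bad triangle is within `s` of its first vertex
  have hdiam : ∀ K ∈ Bj, ∀ y ∈ triHull K, dist y K.1 ≤ s := by
    intro K hK y hy
    have h1 : triDiam K ≤ s := le_csSup ((Tj.finite_toSet.image triDiam).bddAbove)
      ⟨K, hBT hK, rfl⟩
    exact le_trans (Metric.dist_le_diam_of_mem (triHull_compact K).isBounded hy
      (subset_convexHull ℝ _ (Set.mem_insert _ _))) h1
  -- ‖v‖ / N ≤ s
  have hNv : ‖v‖ / N ≤ s := by
    have h1 : r < N := by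
      rw [hNdef]; push_cast; exact Nat.lt_floor_add_one r
    rw [div_le_iff₀ hNpos]
    rw [hrdef, div_lt_iff₀ hs] at h1
    linarith
  -- covering the hit set by N balls of radius 2s
  have hcov : ∀ K ∈ Bj, hitSet v K ⊆
      ⋃ i ∈ Finset.range N, Metric.closedBall (K.1 - ((i : ℝ) / N) • v) (2 * s) := by
    intro K hK x hx
    obtain ⟨y, hy, t, ht, hxy⟩ := hx
    set i : ℕ := min ⌊t * N⌋₊ (N - 1) with hidef
    have hiN : i < N := lt_of_le_of_lt (min_le_right _ _) (Nat.sub_lt (Nat.succ_pos _) one_pos)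
    have hti : |t - (i : ℝ) / N| ≤ 1 / N := by
      rcases le_or_gt ⌊t * N⌋₊ (N - 1) with h | h
      · have hieq : i = ⌊t * N⌋₊ := min_eq_left h
        have h1 : (i : ℝ) ≤ t * N := by
          rw [hieq]; exact Nat.floor_le (mul_nonneg ht.1 (Nat.cast_nonneg N))
        have h2 : t * N < (i : ℝ) + 1 := by rw [hieq]; exact Nat.lt_floor_add_one _
        rw [abs_le]
        have h3 : (i : ℝ) / N ≤ t := by rw [div_le_iff₀ hNpos]; linarith
        have h4 : t ≤ ((i : ℝ) + 1) / N := by rw [le_div_iff₀ hNpos]; linarith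
        have h5 : ((i : ℝ) + 1) / N = (i : ℝ) / N + 1 / N := add_div _ _ _
        constructor <;> [linarith; linarith]
      · have hieq : i = N - 1 := min_eq_right h.le
        have hNn : (N : ℝ) ≤ ⌊t * N⌋₊ := by
          have : N ≤ ⌊t * N⌋₊ := by omega
          exact_mod_cast this
        have h1 : (N : ℝ) ≤ t * N := le_trans hNn
          (Nat.floor_le (mul_nonneg ht.1 (Nat.cast_nonneg N)))
        have ht1 : t = 1 := le_antisymm ht.2 (by nlinarith)
        have hcast : ((i : ℕ) : ℝ) = (N : ℝ) - 1 := by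
          have h1 : (1 : ℕ) ≤ N := Nat.succ_le_succ (Nat.zero_le _)
          rw [hieq, Nat.cast_sub h1, Nat.cast_one]
        rw [ht1, hcast]
        have : (1 : ℝ) - ((N : ℝ) - 1) / N = 1 / N := by field_simp; ring
        rw [this, abs_of_nonneg (by positivity)]
    refine Set.mem_biUnion (Finset.mem_range.2 hiN) ?_
    have hxeq : x - (K.1 - ((i : ℝ) / N) • v) = (y - K.1) + ((i : ℝ) / N - t) • v := by
      have hx' : x = y - t • v := eq_sub_of_add_eq hxy.symm
      rw [hx', sub_smul]; abel
    rw [Metric.mem_closedBall, dist_eq_norm, hxeq]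
    have hb1 : ‖y - K.1‖ ≤ s := by rw [← dist_eq_norm]; exact hdiam K hK y hy
    have hb2 : ‖((i : ℝ) / N - t) • v‖ ≤ s := by
      rw [norm_smul, Real.norm_eq_abs, abs_sub_comm]
      calc |t - (i : ℝ) / N| * ‖v‖ ≤ 1 / N * ‖v‖ :=
            mul_le_mul_of_nonneg_right hti (norm_nonneg v)
        _ = ‖v‖ / N := by ring
        _ ≤ s := hNv
    calc ‖(y - K.1) + ((i : ℝ) / N - t) • v‖ ≤ ‖y - K.1‖ + ‖((i : ℝ) / N - t) • v‖ :=
          norm_add_le _ _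
      _ ≤ 2 * s := by linarith
  -- volume of each hit set
  have hvol : ∀ K ∈ Bj, volume (hitSet v K) ≤ (N : ENNReal) * (ENNReal.ofReal ((2 * s) ^ 2) * κ) := by
    intro K hK
    refine (measure_mono (hcov K hK)).trans ?_
    refine (measure_biUnion_finset_le _ _).trans ?_
    have hball : ∀ i ∈ Finset.range N,
        volume (Metric.closedBall (K.1 - ((i : ℝ) / N) • v) (2 * s)) =
          ENNReal.ofReal ((2 * s) ^ 2) * κ := by
      intro i _
      rw [Measure.addHaar_closedBall _ _ (by positivity)]
      congr 2
      rw [finrank_euclideanSpace_fin]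
    rw [Finset.sum_congr rfl hball, Finset.sum_const, Finset.card_range, nsmul_eq_mul]
  -- the counting function
  set g : EuclideanSpace ℝ (Fin 2) → ENNReal :=
    fun x => ∑ K ∈ Bj, (hitSet v K).indicator (fun _ => (1 : ENNReal)) x with hgdef
  have gmeas : Measurable g :=
    Finset.measurable_sum _ (fun K _ => measurable_const.indicator (hitSet_measurable v K))
  have gcount : ∀ x, g x =
      ((Bj.filter (fun K => (triHull K ∩ segSet x v).Nonempty)).card : ENNReal) := by
    intro x
    rw [hgdef, Finset.card_filter, Nat.cast_sum]
    refine Finset.sum_congr rfl fun K _ => ?_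
    by_cases h : (triHull K ∩ segSet x v).Nonempty
    · have h' : x ∈ hitSet v K := h
      rw [Set.indicator_of_mem h', if_pos h, Nat.cast_one]
    · have h' : x ∉ hitSet v K := h
      rw [Set.indicator_of_notMem h', if_neg h, Nat.cast_zero]
  set F : Set (EuclideanSpace ℝ (Fin 2)) := {x | (m : ENNReal) ≤ g x} with hFdef
  have hEF : ({x | segSet x v ⊆ unitSq} \
      {x | segSet x v ⊆ unitSq ∧
        ((Bj.filter (fun K => (triHull K ∩ segSet x v).Nonempty)).card : ℝ) ≤
          δ * ‖v‖ / s}) ⊆ F := by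
    rintro x ⟨hx1, hx2⟩
    have hgt : δ * ‖v‖ / s <
        ((Bj.filter (fun K => (triHull K ∩ segSet x v).Nonempty)).card : ℝ) := by
      by_contra h
      push_neg at h
      exact hx2 ⟨hx1, h⟩
    have hm : m ≤ (Bj.filter (fun K => (triHull K ∩ segSet x v).Nonempty)).card := by
      have := (Nat.floor_lt (by positivity)).2 hgt
      omega
    show (m : ENNReal) ≤ g x
    rw [gcount x]
    exact_mod_cast hm
  have markov : (m : ENNReal) * volume F ≤ ∑ K ∈ Bj, volume (hitSet v K) := by
    calc (m : ENNReal) * volume F = ∫⁻ _ in F, (m : ENNReal) ∂volume :=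
          (setLIntegral_const F _).symm
      _ ≤ ∫⁻ x in F, g x ∂volume := setLIntegral_mono gmeas (fun x hx => hx)
      _ ≤ ∫⁻ x, g x ∂volume := setLIntegral_le_lintegral F g
      _ = ∑ K ∈ Bj, volume (hitSet v K) := by
          rw [hgdef, lintegral_finset_sum _
            (fun K _ => measurable_const.indicator (hitSet_measurable v K))]
          exact Finset.sum_congr rfl fun K _ => by
            rw [lintegral_indicator (hitSet_measurable v K), setLIntegral_one]
  have hsum : ∑ K ∈ Bj, volume (hitSet v K) ≤
      (Bj.card : ENNReal) * ((N : ENNReal) * (ENNReal.ofReal ((2 * s) ^ 2) * κ)) := by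
    refine (Finset.sum_le_card_nsmul _ _ _ (fun K hK => hvol K hK)).trans_eq ?_
    rw [nsmul_eq_mul]
  -- real-number inequality
  have hreal : (Bj.card : ℝ) * ((N : ℝ) * ((2 * s) ^ 2 * κ.toReal)) ≤
      (m : ℝ) * ((8 * κ.toReal * max 1 δ⁻¹) * ((Bj.card : ℝ) * s ^ 2)) := by
    have hN : (N : ℝ) ≤ r + 1 := by
      rw [hNdef]; push_cast; linarith [Nat.floor_le hr0]
    have hm1 : (1 : ℝ) ≤ m := by
      rw [hmdef]; push_cast; linarith [Nat.cast_nonneg (α := ℝ) ⌊δ * ‖v‖ / s⌋₊]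
    have hm2 : δ * r ≤ (m : ℝ) := by
      have h1 : δ * ‖v‖ / s < (⌊δ * ‖v‖ / s⌋₊ : ℝ) + 1 := Nat.lt_floor_add_one _
      have h2 : δ * r = δ * ‖v‖ / s := by rw [hrdef]; ring
      rw [hmdef]; push_cast; linarith
    have hM : (1 : ℝ) ≤ max 1 δ⁻¹ := le_max_left _ _
    have hMδ : (1 : ℝ) ≤ max 1 δ⁻¹ * δ := by
      calc (1 : ℝ) = δ⁻¹ * δ := (inv_mul_cancel₀ hδ.ne').symm
        _ ≤ max 1 δ⁻¹ * δ := mul_le_mul_of_nonneg_right (le_max_right _ _) hδ.le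
    have e1 : 0 ≤ (max 1 δ⁻¹ * δ - 1) * r := mul_nonneg (by linarith) hr0
    have e2 : 0 ≤ max 1 δ⁻¹ * (2 * (m : ℝ) - 1 - δ * r) :=
      mul_nonneg (by linarith) (by linarith)
    have hkey : (N : ℝ) ≤ 2 * max 1 δ⁻¹ * (m : ℝ) := by nlinarith
    have h4 : (0 : ℝ) ≤ (Bj.card : ℝ) * ((2 * s) ^ 2 * κ.toReal) := by positivity
    calc (Bj.card : ℝ) * ((N : ℝ) * ((2 * s) ^ 2 * κ.toReal))
        = ((Bj.card : ℝ) * ((2 * s) ^ 2 * κ.toReal)) * N := by ring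
      _ ≤ ((Bj.card : ℝ) * ((2 * s) ^ 2 * κ.toReal)) * (2 * max 1 δ⁻¹ * m) :=
          mul_le_mul_of_nonneg_left hkey h4
      _ = (m : ℝ) * ((8 * κ.toReal * max 1 δ⁻¹) * ((Bj.card : ℝ) * s ^ 2)) := by ring
  -- assemble in ENNReal
  have hA : (Bj.card : ENNReal) * ((N : ENNReal) * (ENNReal.ofReal ((2 * s) ^ 2) * κ)) ≤
      (m : ENNReal) * ENNReal.ofReal
        ((8 * κ.toReal * max 1 δ⁻¹) * ((Bj.card : ℝ) * s ^ 2)) := by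
    have hκeq : κ = ENNReal.ofReal κ.toReal := (ENNReal.ofReal_toReal hκfin).symm
    conv_lhs => rw [hκeq]
    rw [← ENNReal.ofReal_natCast Bj.card, ← ENNReal.ofReal_natCast N,
      ← ENNReal.ofReal_natCast m,
      ← ENNReal.ofReal_mul (by positivity), ← ENNReal.ofReal_mul (Nat.cast_nonneg N),
      ← ENNReal.ofReal_mul (Nat.cast_nonneg Bj.card),
      ← ENNReal.ofReal_mul (Nat.cast_nonneg m)]
    exact ENNReal.ofReal_le_ofReal hreal
  have hF : volume F ≤ ENNReal.ofReal
      ((8 * κ.toReal * max 1 δ⁻¹) * ((Bj.card : ℝ) * s ^ 2)) := by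
    have hm0 : (m : ENNReal) ≠ 0 := by
      simp [hmdef]
    have hmtop : (m : ENNReal) ≠ ⊤ := ENNReal.natCast_ne_top m
    have := markov.trans (hsum.trans hA)
    exact (ENNReal.mul_le_mul_iff_right hm0 hmtop).1 this
  exact (measure_mono hEF).trans hF

end Aux

/-- If `(T_j)` are `ζ`-regular flat triangulated surfaces covering the unit square `Q`
with `size(T_j) → 0`, `B_j ⊆ T_j` are sets of bad triangles with
`#B_j · size(T_j)² → 0`, and
`A_j = {x ∈ Qᵛ : #{K ∈ B_j : K ∩ [x,x+v] ≠ ∅} ≤ δ|v|/size(T_j)}`, then the Lebesgue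
measure of `Qᵛ \ A_j` tends to `0`, where `Qᵛ = {x : [x,x+v] ⊆ Q}`. -/
theorem measure_bad_points_tendsto_zero
    (ζ δ : ℝ) (hζ : 0 < ζ) (hδ : 0 < δ) (v : EuclideanSpace ℝ (Fin 2))
    (T B : ℕ → Finset
      (EuclideanSpace ℝ (Fin 2) × EuclideanSpace ℝ (Fin 2) × EuclideanSpace ℝ (Fin 2)))
    (hsurf : ∀ j, IsFlatTriSurface (T j))
    (hcover : ∀ j, unitSq ⊆ ⋃ t ∈ (T j : Set _), triHull t)
    (hsize : Tendsto (fun j => surfSize (T j)) atTop (nhds 0))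
    (hreg : ∀ j, ∀ t ∈ T j, ζ * surfSize (T j) ≤ triDiam t)
    (hB : ∀ j, B j ⊆ T j)
    (hbad : Tendsto (fun j => ((B j).card : ℝ) * surfSize (T j) ^ 2) atTop (nhds 0)) :
    Tendsto
      (fun j => volume
        ({x | segSet x v ⊆ unitSq} \
          {x | segSet x v ⊆ unitSq ∧
            (((B j).filter (fun K => (triHull K ∩ segSet x v).Nonempty)).card : ℝ) ≤
              δ * ‖v‖ / surfSize (T j)}))
      atTop (nhds 0) := by
  
  classical
  have hne : ∀ j, (T j).Nonempty := by
    intro j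
    have hx : (WithLp.toLp 2 (fun _ => (1:ℝ)/2) : EuclideanSpace ℝ (Fin 2)) ∈ unitSq := by
      refine ⟨⟨by norm_num, by norm_num⟩, ⟨by norm_num, by norm_num⟩⟩
    have h := hcover j hx
    rw [Set.mem_iUnion₂] at h
    obtain ⟨t, ht, -⟩ := h
    exact ⟨t, ht⟩
  have hspos : ∀ j, 0 < surfSize (T j) := fun j => surfSize_pos (hsurf j) (hne j)
  set κ : ℝ := (volume (Metric.ball (0 : EuclideanSpace ℝ (Fin 2)) 1)).toReal with hκdef
  have key : ∀ j, volume
      ({x | segSet x v ⊆ unitSq} \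
        {x | segSet x v ⊆ unitSq ∧
          (((B j).filter (fun K => (triHull K ∩ segSet x v).Nonempty)).card : ℝ) ≤
            δ * ‖v‖ / surfSize (T j)}) ≤
      ENNReal.ofReal ((8 * κ * max 1 δ⁻¹) * (((B j).card : ℝ) * surfSize (T j) ^ 2)) :=
    fun j => key_bound δ hδ v (T j) (B j) (hB j) (hspos j)
  refine tendsto_of_tendsto_of_tendsto_of_le_of_le tendsto_const_nhds ?_ (fun j => zero_le) key
  have h2 : Tendsto (fun j => (8 * κ * max 1 δ⁻¹) * (((B j).card : ℝ) * surfSize (T j) ^ 2))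
      atTop (nhds ((8 * κ * max 1 δ⁻¹) * 0)) := hbad.const_mul _
  rw [mul_zero] at h2
  have h3 := ENNReal.tendsto_ofReal h2
  simpa using h3
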